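/- For H ∈ (1/2,1), T > 0, and f(s) = e^{s/T} 1_{s≤0}, the function 𝓛_H(u) = 1_{u≤0}(H−1/2)² (∫_u^0 e^{s/T}(s−u)^{H−3/2} ds)² is bounded on ℝ and integrable over ℝ. -/

import Mathlib

open MeasureTheory Real

theorem L_bounded_integrable (H T : ℝ) (hH : H ∈ Set.Ioo (1/2 : ℝ) 1) (hT : 0 < T) :
    (∃ C, ∀ u : ℝ,
      |(if u ≤ 0 then
          (H - 1/2)^2 * (∫ s in u..0, Real.exp (s/T) * (s - u) ^ (H - 3/2))^2
        else 0)| ≤ C) ∧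
      Integrable (fun u : ℝ =>
        if u ≤ 0 then
          (H - 1/2)^2 * (∫ s in u..0, Real.exp (s/T) * (s - u) ^ (H - 3/2))^2
        else 0) := by
  obtain ⟨hH1, hH2⟩ := hH
  have hε : (0:ℝ) < H - 1/2 := by linarith
  have hpow : (-1:ℝ) < H - 3/2 := by linarith
  have hexp_neg : H - 3/2 ≤ 0 := by linarith
  set g : ℝ → ℝ := fun u => ∫ s in u..0, Real.exp (s/T) * (s - u) ^ (H - 3/2) with hgdef
  -- interval integrability facts
  have hIIr : ∀ u a b : ℝ, IntervalIntegrable (fun s => (s - u) ^ (H - 3/2)) volume a b := by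
    intro u a b
    have h0 := (intervalIntegral.intervalIntegrable_rpow' (a := a - u) (b := b - u) hpow).comp_sub_right u
    simpa using h0
  have hexpC : Continuous fun s : ℝ => Real.exp (s / T) :=
    Real.continuous_exp.comp (continuous_id.div_const T)
  have hII : ∀ u a b : ℝ, IntervalIntegrable
      (fun s => Real.exp (s/T) * (s - u) ^ (H - 3/2)) volume a b :=
    fun u a b => (hIIr u a b).continuousOn_mul hexpC.continuousOn
  have hIIe : ∀ a b : ℝ, IntervalIntegrable (fun s => Real.exp (s/T)) volume a b :=
    fun a b => hexpC.intervalIntegrable a b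
  -- power integral
  have hpint : ∀ u c : ℝ, (∫ s in u..c, (s - u) ^ (H - 3/2)) = (c - u) ^ (H - 1/2) / (H - 1/2) := by
    intro u c
    rw [intervalIntegral.integral_comp_sub_right (fun t => t ^ (H - 3/2)) u,
      integral_rpow (Or.inl hpow), sub_self,
      Real.zero_rpow (by intro h; rw [show H - 3/2 + 1 = H - 1/2 by ring] at h; linarith),
      show H - 3/2 + 1 = H - 1/2 by ring, sub_zero]
  -- exp integral bound
  have heint : ∀ a b : ℝ, b ≤ 0 → (∫ s in a..b, Real.exp (s/T)) ≤ T := by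
    intro a b hb0
    rw [intervalIntegral.integral_comp_div (f := Real.exp) (ne_of_gt hT), integral_exp,
      smul_eq_mul]
    have h1 : Real.exp (b/T) ≤ 1 :=
      Real.exp_le_one_iff.mpr (div_nonpos_of_nonpos_of_nonneg hb0 hT.le)
    have h2 : 0 < Real.exp (a/T) := Real.exp_pos _
    nlinarith
  -- nonnegativity of g
  have hg_nonneg : ∀ u : ℝ, u ≤ 0 → 0 ≤ g u := by
    intro u hu
    exact intervalIntegral.integral_nonneg hu (fun s hs =>
      mul_nonneg (Real.exp_pos _).le (Real.rpow_nonneg (by linarith [hs.1]) _))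
  -- uniform bound
  have hgM : ∀ u : ℝ, u ≤ 0 → g u ≤ 1/(H-1/2) + T := by
    intro u hu
    by_cases hu1 : -1 ≤ u
    · have h1 : g u ≤ ∫ s in u..0, (s - u) ^ (H - 3/2) := by
        apply intervalIntegral.integral_mono_on hu (hII u u 0) (hIIr u u 0)
        intro s hs
        have he1 : Real.exp (s/T) ≤ 1 :=
          Real.exp_le_one_iff.mpr (div_nonpos_of_nonpos_of_nonneg hs.2 hT.le)
        exact mul_le_of_le_one_left (Real.rpow_nonneg (by linarith [hs.1]) _) he1
      rw [hpint u 0] at h1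
      have h2 : (0 - u) ^ (H - 1/2) ≤ 1 :=
        Real.rpow_le_one (by linarith) (by linarith) (by linarith)
      have h3 : (0 - u) ^ (H - 1/2) / (H - 1/2) ≤ 1 / (H - 1/2) :=
        (div_le_div_iff_of_pos_right hε).mpr h2
      linarith
    · push_neg at hu1
      have hsplit := (intervalIntegral.integral_add_adjacent_intervals
        (hII u u (u+1)) (hII u (u+1) 0))
      have hb1 : (∫ s in u..u+1, Real.exp (s/T) * (s - u) ^ (H - 3/2)) ≤ 1/(H-1/2) := by
        have h1 : (∫ s in u..u+1, Real.exp (s/T) * (s - u) ^ (H - 3/2))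
            ≤ ∫ s in u..u+1, (s - u) ^ (H - 3/2) := by
          apply intervalIntegral.integral_mono_on (by linarith) (hII u u (u+1)) (hIIr u u (u+1))
          intro s hs
          have he1 : Real.exp (s/T) ≤ 1 :=
            Real.exp_le_one_iff.mpr (div_nonpos_of_nonpos_of_nonneg (by linarith [hs.2]) hT.le)
          exact mul_le_of_le_one_left (Real.rpow_nonneg (by linarith [hs.1]) _) he1
        rw [hpint u (u+1), show u + 1 - u = (1:ℝ) by ring, Real.one_rpow] at h1
        exact h1
      have hb2 : (∫ s in (u+1)..0, Real.exp (s/T) * (s - u) ^ (H - 3/2)) ≤ T := by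
        have h1 : (∫ s in (u+1)..0, Real.exp (s/T) * (s - u) ^ (H - 3/2))
            ≤ ∫ s in (u+1)..0, Real.exp (s/T) := by
          apply intervalIntegral.integral_mono_on (by linarith) (hII u (u+1) 0) (hIIe (u+1) 0)
          intro s hs
          have h2 : (s - u) ^ (H - 3/2) ≤ 1 :=
            Real.rpow_le_one_of_one_le_of_nonpos (by linarith [hs.1]) hexp_neg
          exact mul_le_of_le_one_right (Real.exp_pos _).le h2
        exact h1.trans (heint (u+1) 0 le_rfl)
      calc g u = _ + _ := hsplit.symm
        _ ≤ 1/(H-1/2) + T := add_le_add hb1 hb2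
  -- decay bound for u ≤ -1
  have hdecay : ∀ u : ℝ, u ≤ -1 → g u ≤ (T/(H-1/2) + T) * (-u/2) ^ (H - 3/2) := by
    intro u hu
    have hu0 : u ≤ 0 := by linarith
    have hneg : (0:ℝ) < -u/2 := by linarith
    have hsplit := intervalIntegral.integral_add_adjacent_intervals
      (hII u u (u/2)) (hII u (u/2) 0)
    have hb1 : (∫ s in u..u/2, Real.exp (s/T) * (s - u) ^ (H - 3/2))
        ≤ (T/(H-1/2)) * (-u/2) ^ (H - 3/2) := by
      have h1 : (∫ s in u..u/2, Real.exp (s/T) * (s - u) ^ (H - 3/2))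
          ≤ ∫ s in u..u/2, Real.exp (u/2/T) * (s - u) ^ (H - 3/2) := by
        apply intervalIntegral.integral_mono_on (by linarith) (hII u u (u/2))
          ((hIIr u u (u/2)).const_mul _)
        intro s hs
        have he1 : Real.exp (s/T) ≤ Real.exp (u/2/T) :=
          Real.exp_le_exp.mpr ((div_le_div_iff_of_pos_right hT).mpr hs.2)
        exact mul_le_mul_of_nonneg_right he1 (Real.rpow_nonneg (by linarith [hs.1]) _)
      rw [intervalIntegral.integral_const_mul, hpint u (u/2),
        show u/2 - u = -u/2 by ring] at h1
      have hr : (-u/2) ^ (H - 1/2) = (-u/2) * (-u/2) ^ (H - 3/2) := by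
        rw [show H - 1/2 = 1 + (H - 3/2) by ring, Real.rpow_add hneg, Real.rpow_one]
      rw [hr] at h1
      -- exp(u/2/T) * (-u/2) ≤ T
      have hE : (0:ℝ) < Real.exp (-u/(2*T)) := Real.exp_pos _
      have hkey : -u/(2*T) ≤ Real.exp (-u/(2*T)) := by
        linarith [Real.add_one_le_exp (-u/(2*T))]
      have h3 : -u/2 ≤ T * Real.exp (-u/(2*T)) := by
        have h4 := mul_le_mul_of_nonneg_left hkey hT.le
        have h5 : T * (-u/(2*T)) = -u/2 := by field_simp
        linarith
      have h6 : Real.exp (u/2/T) * (-u/2) ≤ T := by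
        rw [show u/2/T = -(-u/(2*T)) by ring, Real.exp_neg]
        rw [inv_mul_le_iff₀ hE]
        linarith
      have h7 : Real.exp (u/2/T) * ((-u/2) * (-u/2) ^ (H - 3/2)) / (H - 1/2)
          ≤ T * (-u/2) ^ (H - 3/2) / (H - 1/2) := by
        apply (div_le_div_iff_of_pos_right hε).mpr
        rw [← mul_assoc]
        exact mul_le_mul_of_nonneg_right h6 (Real.rpow_nonneg hneg.le _)
      calc (∫ s in u..u/2, Real.exp (s/T) * (s - u) ^ (H - 3/2))
          ≤ Real.exp (u/2/T) * ((-u/2) * (-u/2) ^ (H - 3/2) / (H - 1/2)) := h1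
        _ = Real.exp (u/2/T) * ((-u/2) * (-u/2) ^ (H - 3/2)) / (H - 1/2) := by ring
        _ ≤ T * (-u/2) ^ (H - 3/2) / (H - 1/2) := h7
        _ = (T/(H-1/2)) * (-u/2) ^ (H - 3/2) := by ring
    have hb2 : (∫ s in (u/2)..0, Real.exp (s/T) * (s - u) ^ (H - 3/2))
        ≤ (-u/2) ^ (H - 3/2) * T := by
      have h1 : (∫ s in (u/2)..0, Real.exp (s/T) * (s - u) ^ (H - 3/2))
          ≤ ∫ s in (u/2)..0, (-u/2) ^ (H - 3/2) * Real.exp (s/T) := by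
        apply intervalIntegral.integral_mono_on (by linarith) (hII u (u/2) 0)
          ((hIIe (u/2) 0).const_mul _)
        intro s hs
        have h2 : (s - u) ^ (H - 3/2) ≤ (-u/2) ^ (H - 3/2) :=
          Real.rpow_le_rpow_of_nonpos hneg (by linarith [hs.1]) hexp_neg
        rw [mul_comm]
        exact mul_le_mul_of_nonneg_right h2 (Real.exp_pos _).le
      rw [intervalIntegral.integral_const_mul] at h1
      exact h1.trans (mul_le_mul_of_nonneg_left (heint (u/2) 0 le_rfl)
        (Real.rpow_nonneg hneg.le _))
    calc g u = _ + _ := hsplit.symm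
      _ ≤ (T/(H-1/2)) * (-u/2) ^ (H - 3/2) + (-u/2) ^ (H - 3/2) * T := add_le_add hb1 hb2
      _ = (T/(H-1/2) + T) * (-u/2) ^ (H - 3/2) := by ring
  -- constants
  set M : ℝ := 1/(H-1/2) + T with hMdef
  have hM0 : 0 < M := by positivity
  set C7 : ℝ := T/(H-1/2) + T with hC7def
  have hC70 : 0 < C7 := by positivity
  -- the uniform bound on the whole function
  have hbound : ∀ u : ℝ, |(if u ≤ 0 then (H - 1/2)^2 * (g u)^2 else 0)| ≤ (H-1/2)^2 * M^2 := by
    intro u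
    by_cases hu : u ≤ 0
    · rw [if_pos hu, abs_of_nonneg (by positivity)]
      have h1 : (g u)^2 ≤ M^2 := pow_le_pow_left₀ (hg_nonneg u hu) (hgM u hu) 2
      exact mul_le_mul_of_nonneg_left h1 (by positivity)
    · rw [if_neg hu, abs_zero]
      positivity
  refine ⟨⟨(H-1/2)^2 * M^2, hbound⟩, ?_⟩
  -- measurability
  have hPmeas : Measurable (fun p : ℝ × ℝ =>
      if p.1 < p.2 ∧ p.2 ≤ 0 then Real.exp (p.2/T) * (p.2 - p.1) ^ (H - 3/2) else 0) := by
    apply Measurable.ite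
    · exact (measurableSet_lt measurable_fst measurable_snd).inter
        (measurableSet_le measurable_snd measurable_const)
    · exact ((measurable_snd.div_const T).exp.mul
        ((measurable_snd.sub measurable_fst).pow measurable_const))
    · exact measurable_const
  have hGsm : StronglyMeasurable (fun u : ℝ => ∫ s,
      (if u < s ∧ s ≤ 0 then Real.exp (s/T) * (s - u) ^ (H - 3/2) else 0)) :=
    hPmeas.stronglyMeasurable.integral_prod_right'
  have hgeq : ∀ u : ℝ, u ≤ 0 → g u = ∫ s,
      (if u < s ∧ s ≤ 0 then Real.exp (s/T) * (s - u) ^ (H - 3/2) else 0) := by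
    intro u hu
    rw [hgdef]
    simp only
    rw [intervalIntegral.integral_of_le hu,
      ← MeasureTheory.integral_indicator measurableSet_Ioc]
    congr 1
    funext s
    simp [Set.indicator_apply, Set.mem_Ioc]
  have hFeq : (fun u : ℝ => if u ≤ 0 then (H - 1/2)^2 * (g u)^2 else 0)
      = fun u : ℝ => if u ≤ 0 then (H - 1/2)^2 * (∫ s,
        (if u < s ∧ s ≤ 0 then Real.exp (s/T) * (s - u) ^ (H - 3/2) else 0))^2 else 0 := by
    funext u
    by_cases hu : u ≤ 0
    · rw [if_pos hu, if_pos hu, hgeq u hu]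
    · rw [if_neg hu, if_neg hu]
  have hFmeas : AEStronglyMeasurable
      (fun u : ℝ => if u ≤ 0 then (H - 1/2)^2 * (g u)^2 else 0) volume := by
    rw [hFeq]
    refine Measurable.aestronglyMeasurable ?_
    apply Measurable.ite measurableSet_Iic
    · exact measurable_const.mul (hGsm.measurable.pow_const 2)
    · exact measurable_const
  -- dominating function
  set D : ℝ → ℝ := (Set.Iio (-1:ℝ)).indicator
        (fun u => ((H-1/2)^2 * C7^2) * (-u/2) ^ (2*H - 3))
      + (Set.Icc (-1:ℝ) 0).indicator (fun _ => (H-1/2)^2 * M^2) with hDdef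
  have hDint : Integrable D := by
    apply Integrable.add
    · apply (IntegrableOn.integrable_indicator · measurableSet_Iio)
      have h2 : IntegrableOn (fun x : ℝ => x ^ (2*H - 3)) (Set.Ioi (1:ℝ)) :=
        integrableOn_Ioi_rpow_of_lt (by linarith) one_pos
      have h3 := (MeasurePreserving.integrableOn_comp_preimage
        (Measure.measurePreserving_neg (volume : Measure ℝ))
        (Homeomorph.neg ℝ).measurableEmbedding
        (f := fun x : ℝ => x ^ (2*H - 3)) (s := Set.Ioi 1)).mpr h2
      have h4 : IntegrableOn (fun u : ℝ => (-u) ^ (2*H - 3)) (Set.Iio (-1)) := by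
        simpa only [Function.comp_def, Set.neg_preimage, Set.neg_Ioi] using h3
      have h5 : IntegrableOn
          (fun u : ℝ => (((H-1/2)^2 * C7^2) * (1/2 : ℝ) ^ (2*H - 3)) * (-u) ^ (2*H - 3))
          (Set.Iio (-1)) volume := h4.const_mul _
      apply h5.congr_fun _ measurableSet_Iio
      intro u hu
      simp only [Set.mem_Iio] at hu
      have hnu : (0:ℝ) ≤ -u := by linarith
      show (H - 1/2)^2 * C7^2 * (1/2:ℝ) ^ (2*H - 3) * (-u) ^ (2*H - 3)
        = (H - 1/2)^2 * C7^2 * (-u/2) ^ (2*H - 3)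
      rw [show (-u/2 : ℝ) = (1/2) * (-u) by ring, Real.mul_rpow (by norm_num) hnu]
      ring
    · apply (IntegrableOn.integrable_indicator · measurableSet_Icc)
      exact integrableOn_const measure_Icc_lt_top.ne
  apply Integrable.mono' hDint hFmeas
  filter_upwards with u
  rw [Real.norm_eq_abs]
  by_cases hu1 : u < -1
  · have hu0 : u ≤ 0 := by linarith
    rw [if_pos hu0, abs_of_nonneg (by positivity)]
    have hneg : (0:ℝ) < -u/2 := by linarith
    have hDu : D u = ((H-1/2)^2 * C7^2) * (-u/2) ^ (2*H - 3) := by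
      rw [hDdef]
      simp only [Pi.add_apply, Set.indicator_apply]
      rw [if_pos (Set.mem_Iio.mpr hu1), if_neg (by simp [Set.mem_Icc]; intro h; linarith)]
      ring
    rw [hDu]
    have h1 : g u ≤ C7 * (-u/2) ^ (H - 3/2) := hdecay u (by linarith)
    have h2 : 0 ≤ g u := hg_nonneg u hu0
    have h3 : (g u)^2 ≤ (C7 * (-u/2) ^ (H - 3/2))^2 := pow_le_pow_left₀ h2 h1 2
    have h4 : (C7 * (-u/2) ^ (H - 3/2))^2 = C7^2 * (-u/2) ^ (2*H - 3) := by
      rw [mul_pow, ← Real.rpow_natCast ((-u/2) ^ (H - 3/2)) 2, ← Real.rpow_mul hneg.le]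
      congr 1
      push_cast
      ring
    rw [h4] at h3
    exact (mul_le_mul_of_nonneg_left h3 (sq_nonneg (H - 1/2))).trans_eq
      (mul_assoc _ _ _).symm
  · push_neg at hu1
    by_cases hu0 : u ≤ 0
    · rw [if_pos hu0, abs_of_nonneg (by positivity)]
      have hDu : D u = (H-1/2)^2 * M^2 := by
        rw [hDdef]
        simp only [Pi.add_apply, Set.indicator_apply]
        rw [if_neg (by simp [Set.mem_Iio]; linarith), if_pos (Set.mem_Icc.mpr ⟨hu1, hu0⟩)]
        ring
      rw [hDu]
      exact mul_le_mul_of_nonneg_left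
        (pow_le_pow_left₀ (hg_nonneg u hu0) (hgM u hu0) 2) (by positivity)
    · push_neg at hu0
      rw [if_neg (not_le.mpr hu0), abs_zero]
      have hDu : D u = 0 := by
        rw [hDdef]
        simp only [Pi.add_apply, Set.indicator_apply]
        rw [if_neg (by simp [Set.mem_Iio]; linarith), if_neg (by simp [Set.mem_Icc]; intro h; linarith)]
        ring
      rw [hDu]
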